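/- For every real z ≥ 1, the sum of (n/φ(n))² over all positive integers n ≤ z is less than 4.5·z. -/

import Mathlib

open Finset

/-- `c p = (2p-1)/(p-1)^2`, so that `(p/(p-1))^2 = 1 + c p`. -/
noncomputable def cc (p : ℕ) : ℝ := (2*(p:ℝ)-1)/(((p:ℝ)-1)^2)

lemma cc_nonneg {p : ℕ} (hp : 2 ≤ p) : 0 ≤ cc p := by
  have h2 : (2:ℝ) ≤ (p:ℝ) := by exact_mod_cast hp
  apply div_nonneg (by linarith) (by positivity)

lemma cc_div_nonneg {p : ℕ} (hp : 2 ≤ p) : 0 ≤ cc p / p := by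
  have h2 : (2:ℝ) ≤ (p:ℝ) := by exact_mod_cast hp
  exact div_nonneg (cc_nonneg hp) (by linarith)

/-- Step A: `(n/φ n)^2 = ∏_{p ∣ n} (cc p + 1)`. -/
lemma ratio_sq (n : ℕ) (hn : n ≠ 0) :
    ((n:ℝ)/(n.totient:ℝ))^2 = ∏ p ∈ n.primeFactors, (cc p + 1) := by
  have key := Nat.totient_mul_prod_primeFactors n
  have h2 : ∀ p ∈ n.primeFactors, ((p - 1 : ℕ):ℝ) = (p:ℝ) - 1 := by
    intro p hp
    have := (Nat.prime_of_mem_primeFactors hp).two_le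
    rw [Nat.cast_sub (by omega)]
    norm_num
  have hpb : ∀ p ∈ n.primeFactors, (1:ℝ) < (p:ℝ) := by
    intro p hp
    have := (Nat.prime_of_mem_primeFactors hp).two_le
    exact_mod_cast this.trans_lt' (by norm_num)
  have h1 : (n.totient : ℝ) * ∏ p ∈ n.primeFactors, (p:ℝ)
      = (n:ℝ) * ∏ p ∈ n.primeFactors, ((p:ℝ)-1) := by
    calc (n.totient : ℝ) * ∏ p ∈ n.primeFactors, (p:ℝ)
        = ((n.totient * ∏ p ∈ n.primeFactors, p : ℕ) : ℝ) := by push_cast; ring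
      _ = ((n * ∏ p ∈ n.primeFactors, (p-1) : ℕ) : ℝ) := by rw [key]
      _ = (n:ℝ) * ∏ p ∈ n.primeFactors, ((p:ℝ)-1) := by
          push_cast
          rw [Finset.prod_congr rfl h2]
  have htot : (0:ℝ) < (n.totient : ℝ) := by
    exact_mod_cast Nat.totient_pos.mpr (Nat.pos_of_ne_zero hn)
  have hprod1 : (0:ℝ) < ∏ p ∈ n.primeFactors, ((p:ℝ)-1) :=
    Finset.prod_pos (fun p hp => by have := hpb p hp; linarith)
  have hratio : (n:ℝ)/(n.totient:ℝ) = ∏ p ∈ n.primeFactors, ((p:ℝ)/((p:ℝ)-1)) := by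
    rw [Finset.prod_div_distrib]
    rw [div_eq_div_iff htot.ne' hprod1.ne']
    linarith [h1]
  rw [hratio, ← Finset.prod_pow]
  apply Finset.prod_congr rfl
  intro p hp
  have hpb' := hpb p hp
  have hne : (p:ℝ) - 1 ≠ 0 := by linarith
  rw [cc]
  field_simp
  ring

/-- Counting multiples. -/
lemma count_div (N : ℕ) (S : Finset ℕ) (hS : ∀ p ∈ S, p.Prime) :
    ((Finset.Icc 1 N).filter (fun n => S ⊆ n.primeFactors)).card = N / (∏ p ∈ S, p) := by
  rw [show Finset.Icc 1 N = Finset.Ioc 0 N from Finset.Icc_add_one_left_eq_Ioc 0 N]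
  have h : ∀ n ∈ Finset.Ioc 0 N, (S ⊆ n.primeFactors ↔ (∏ p ∈ S, p) ∣ n) := by
    intro n hn
    rw [Finset.mem_Ioc] at hn
    constructor
    · intro h
      exact Finset.prod_primes_dvd n (fun p hp => (hS p hp).prime)
        (fun p hp => Nat.dvd_of_mem_primeFactors (h hp))
    · intro h p hp
      exact Nat.mem_primeFactors.mpr ⟨hS p hp, (Finset.dvd_prod_of_mem _ hp).trans h, by omega⟩
  rw [Finset.filter_congr h, Nat.Ioc_filter_dvd_card_eq_div]

/-- `∏ (1 + x i) ≤ 1/(1 - ∑ x i)` for nonnegative `x` with small sum. -/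
lemma prod_one_add_le (s : Finset ℕ) (x : ℕ → ℝ) (hx : ∀ i ∈ s, 0 ≤ x i)
    (hs : ∑ i ∈ s, x i < 1) :
    ∏ i ∈ s, (1 + x i) ≤ 1 / (1 - ∑ i ∈ s, x i) := by
  induction s using Finset.induction_on with
  | empty => simp
  | @insert a s ha ih =>
    rw [Finset.sum_insert ha] at hs ⊢
    rw [Finset.prod_insert ha]
    have hxa : 0 ≤ x a := hx a (Finset.mem_insert_self a s)
    have hxs : ∀ i ∈ s, 0 ≤ x i := fun i hi => hx i (Finset.mem_insert_of_mem hi)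
    have hu : 0 ≤ ∑ i ∈ s, x i := Finset.sum_nonneg hxs
    have hs' : ∑ i ∈ s, x i < 1 := by linarith
    have ih' := ih hxs hs'
    set u := ∑ i ∈ s, x i
    have h1u : (0:ℝ) < 1 - u := by linarith
    have h2u : (0:ℝ) < 1 - (x a + u) := by linarith
    have hprodpos : 0 ≤ ∏ i ∈ s, (1 + x i) :=
      Finset.prod_nonneg (fun i hi => by have := hxs i hi; linarith)
    calc (1 + x a) * ∏ i ∈ s, (1 + x i) ≤ (1 + x a) * (1/(1-u)) := by
          apply mul_le_mul_of_nonneg_left ih' (by linarith)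
      _ ≤ 1 / (1 - (x a + u)) := by
          rw [mul_one_div, div_le_div_iff₀ h1u h2u]
          nlinarith

lemma sum_sq_aux : ∀ M : ℕ, ∑ k ∈ Finset.Icc 50 (49+M), (1:ℝ)/(k:ℝ)^2 ≤ 1/49 - 1/((49+M:ℕ):ℝ) := by
  intro M
  induction M with
  | zero => rw [Finset.Icc_eq_empty (by omega)]; norm_num
  | succ m ih =>
    rw [show 49 + (m+1) = (49+m)+1 by ring, Finset.sum_Icc_succ_top (by omega)]
    have ha : (49:ℝ) ≤ ((49+m:ℕ):ℝ) := by exact_mod_cast Nat.le_add_right 49 m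
    set a : ℝ := ((49+m:ℕ):ℝ) with hadef
    have hcast : (((49+m)+1 : ℕ):ℝ) = a + 1 := by rw [hadef]; push_cast; ring
    rw [hcast]
    have hapos : (0:ℝ) < a := by linarith
    have ha1 : (0:ℝ) < a + 1 := by linarith
    have key : 1/(a+1)^2 ≤ 1/a - 1/(a+1) := by
      rw [div_sub_div _ _ hapos.ne' ha1.ne']
      rw [div_le_div_iff₀ (by positivity) (by positivity)]
      ring_nf
      nlinarith
    linarith

lemma sum_sq (N : ℕ) : ∑ k ∈ Finset.Icc 50 N, (1:ℝ)/(k:ℝ)^2 ≤ 1/49 := by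
  rcases le_or_gt N 49 with h | h
  · rw [Finset.Icc_eq_empty (by omega)]; norm_num
  · have h1 := sum_sq_aux (N - 49)
    rw [show 49 + (N-49) = N by omega] at h1
    have : (0:ℝ) ≤ 1/((N:ℕ):ℝ) := by positivity
    linarith

/-- Tail sum over primes `> 100` bounded by `1/98`. -/
lemma tail_sum (N : ℕ) (T' : Finset ℕ) (hT' : ∀ p ∈ T', p.Prime ∧ 100 < p ∧ p ≤ N) :
    ∑ p ∈ T', cc p / p ≤ 1/98 := by
  have hodd : ∀ p ∈ T', p % 2 = 1 := by
    intro p hp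
    obtain ⟨hprime, h100, hN⟩ := hT' p hp
    exact Nat.odd_iff.mp (hprime.odd_of_ne_two (by omega))
  have hterm : ∀ p ∈ T', cc p / p ≤ (1/2) * (1/((((p-1)/2 : ℕ)):ℝ)^2) := by
    intro p hp
    obtain ⟨hprime, h100, hN⟩ := hT' p hp
    have hmod := hodd p hp
    set k := (p-1)/2 with hk
    have hpk : p = 2*k+1 := by omega
    have hk50 : 50 ≤ k := by omega
    have hx50 : (50:ℝ) ≤ (k:ℝ) := by exact_mod_cast hk50
    have hpx : (p:ℝ) = 2*(k:ℝ)+1 := by rw [hpk]; push_cast; ring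
    rw [cc, div_div, hpx,
      show (1:ℝ)/2 * (1/((k:ℕ):ℝ)^2) = 1/(2*((k:ℕ):ℝ)^2) from by ring]
    rw [div_le_div_iff₀ (by nlinarith) (by nlinarith)]
    nlinarith
  calc ∑ p ∈ T', cc p / p ≤ ∑ p ∈ T', (1/2) * (1/((((p-1)/2 : ℕ)):ℝ)^2) :=
        Finset.sum_le_sum hterm
    _ = ∑ k ∈ T'.image (fun p => (p-1)/2), (1/2) * (1/((k:ℕ):ℝ)^2) := by
        rw [Finset.sum_image]
        intro p hp q hq hpq
        have h1 := hodd p hp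
        have h2 := hodd q hq
        simp only at hpq
        omega
    _ ≤ ∑ k ∈ Finset.Icc 50 N, (1/2) * (1/((k:ℕ):ℝ)^2) := by
        apply Finset.sum_le_sum_of_subset_of_nonneg
        · intro k hk
          simp only [Finset.mem_image] at hk
          obtain ⟨p, hp, rfl⟩ := hk
          obtain ⟨hprime, h100, hN⟩ := hT' p hp
          rw [Finset.mem_Icc]
          omega
        · intro k _ _
          positivity
    _ ≤ 1/98 := by
        rw [← Finset.mul_sum]
        have := sum_sq N
        linarith

def E100 : Finset ℕ := {2,3,5,7,11,13,17,19,23,29,31,37,41,43,47,53,59,61,67,71,73,79,83,89,97}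

lemma mem_E100 {p : ℕ} (hp : p.Prime) (h : p ≤ 100) : p ∈ E100 := by
  have h2 := hp.two_le
  interval_cases p <;> first | rfl | decide | (exfalso; revert hp; decide)

lemma E100_two_le {p : ℕ} (hp : p ∈ E100) : 2 ≤ p := by
  fin_cases hp <;> norm_num

lemma prod_E100 : ∏ p ∈ E100, (1 + cc p / p) ≤ 4.42 := by
  rw [E100]
  rw [Finset.prod_insert (by decide)]
  rw [Finset.prod_insert (by decide)]
  rw [Finset.prod_insert (by decide)]
  rw [Finset.prod_insert (by decide)]
  rw [Finset.prod_insert (by decide)]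
  rw [Finset.prod_insert (by decide)]
  rw [Finset.prod_insert (by decide)]
  rw [Finset.prod_insert (by decide)]
  rw [Finset.prod_insert (by decide)]
  rw [Finset.prod_insert (by decide)]
  rw [Finset.prod_insert (by decide)]
  rw [Finset.prod_insert (by decide)]
  rw [Finset.prod_insert (by decide)]
  rw [Finset.prod_insert (by decide)]
  rw [Finset.prod_insert (by decide)]
  rw [Finset.prod_insert (by decide)]
  rw [Finset.prod_insert (by decide)]
  rw [Finset.prod_insert (by decide)]
  rw [Finset.prod_insert (by decide)]
  rw [Finset.prod_insert (by decide)]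
  rw [Finset.prod_insert (by decide)]
  rw [Finset.prod_insert (by decide)]
  rw [Finset.prod_insert (by decide)]
  rw [Finset.prod_insert (by decide)]
  rw [Finset.prod_singleton]
  simp only [cc]
  norm_num

/-- For every real `z ≥ 1`, `∑_{n ≤ z} (n/φ(n))² < 4.5·z`. -/
theorem stmt_16 (z : ℝ) (hz : 1 ≤ z) :
    ∑ n ∈ Finset.Icc 1 ⌊z⌋₊, ((n : ℝ) / (Nat.totient n : ℝ)) ^ 2 < 4.5 * z := by
  set N := ⌊z⌋₊ with hNdef
  have hz0 : (0:ℝ) ≤ z := by linarith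
  have hNz : (N:ℝ) ≤ z := Nat.floor_le hz0
  set T := (Finset.range (N+1)).filter Nat.Prime with hTdef
  have hTp : ∀ p ∈ T, p.Prime := fun p hp => (Finset.mem_filter.mp hp).2
  have hPn : ∀ n ∈ Finset.Icc 1 N, n.primeFactors ⊆ T := by
    intro n hn p hp
    rw [Finset.mem_Icc] at hn
    rw [hTdef, Finset.mem_filter, Finset.mem_range]
    have hd := Nat.dvd_of_mem_primeFactors hp
    have := Nat.le_of_dvd (by omega) hd
    exact ⟨by omega, Nat.prime_of_mem_primeFactors hp⟩
  -- Step 1: expand the square as a sum over subsets of primes and swap sums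
  have h1 : ∑ n ∈ Finset.Icc 1 N, ((n:ℝ)/(n.totient:ℝ))^2
      = ∑ S ∈ T.powerset, (∏ p ∈ S, cc p) *
        (((Finset.Icc 1 N).filter (fun n => S ⊆ n.primeFactors)).card : ℝ) := by
    have e1 : ∀ n ∈ Finset.Icc 1 N, ((n:ℝ)/(n.totient:ℝ))^2
        = ∑ S ∈ T.powerset, (if S ⊆ n.primeFactors then ∏ p ∈ S, cc p else 0) := by
      intro n hn
      have hsub := hPn n hn
      rw [Finset.mem_Icc] at hn
      have hset : T.powerset.filter (fun S => S ⊆ n.primeFactors) = n.primeFactors.powerset := by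
        ext S
        simp only [Finset.mem_filter, Finset.mem_powerset]
        exact ⟨fun h => h.2, fun h => ⟨h.trans hsub, h⟩⟩
      rw [ratio_sq n (by omega), Finset.prod_add, ← Finset.sum_filter, hset]
      simp only [Finset.prod_const_one, mul_one]
    rw [Finset.sum_congr rfl e1, Finset.sum_comm]
    apply Finset.sum_congr rfl
    intro S hS
    rw [← Finset.sum_filter, Finset.sum_const, nsmul_eq_mul, mul_comm]
  -- Step 2: bound each term
  have h2 : ∀ S ∈ T.powerset, (∏ p ∈ S, cc p) *
      (((Finset.Icc 1 N).filter (fun n => S ⊆ n.primeFactors)).card : ℝ)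
      ≤ z * ∏ p ∈ S, (cc p / p) := by
    intro S hS
    rw [Finset.mem_powerset] at hS
    have hSp : ∀ p ∈ S, p.Prime := fun p hp => hTp p (hS hp)
    have hSd : ∀ p ∈ S, 2 ≤ p := fun p hp => (hSp p hp).two_le
    rw [count_div N S hSp]
    set d := ∏ p ∈ S, p with hd
    have hdpos : 0 < d := Finset.prod_pos (fun p hp => by have := hSd p hp; omega)
    have hdr : (0:ℝ) < (d:ℝ) := by exact_mod_cast hdpos
    have hcard : ((N / d : ℕ):ℝ) ≤ z / d := by
      calc ((N / d : ℕ):ℝ) ≤ (N:ℝ)/(d:ℝ) := Nat.cast_div_le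
        _ ≤ z / d := by gcongr
    have hw : 0 ≤ ∏ p ∈ S, cc p := Finset.prod_nonneg (fun p hp => cc_nonneg (hSd p hp))
    calc (∏ p ∈ S, cc p) * ((N / d : ℕ):ℝ) ≤ (∏ p ∈ S, cc p) * (z / d) :=
          mul_le_mul_of_nonneg_left hcard hw
      _ = z * ((∏ p ∈ S, cc p) / (d:ℝ)) := by ring
      _ = z * ∏ p ∈ S, (cc p / p) := by
          rw [hd, Nat.cast_prod, ← Finset.prod_div_distrib]
  -- Step 3: resum
  have h3 : ∑ S ∈ T.powerset, z * ∏ p ∈ S, (cc p / p) = z * ∏ p ∈ T, (1 + cc p / p) := by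
    rw [← Finset.mul_sum]
    congr 1
    rw [Finset.prod_congr rfl (fun p _ => add_comm 1 (cc p / p)), Finset.prod_add]
    simp only [Finset.prod_const_one, mul_one]
  -- Step 4: uniform product bound
  have hsplit := (Finset.prod_filter_mul_prod_filter_not T (fun p => p ≤ 100)
    (fun p => 1 + cc p / p)).symm
  have hlargenn : ∀ p ∈ T.filter (fun p => ¬ p ≤ 100), (0:ℝ) ≤ 1 + cc p / p := by
    intro p hp
    have := cc_div_nonneg (hTp p (Finset.mem_filter.mp hp).1).two_le
    linarith
  have hsmall : ∏ p ∈ T.filter (fun p => p ≤ 100), (1 + cc p / p) ≤ 4.42 := by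
    refine le_trans ?_ prod_E100
    have hsub : T.filter (fun p => p ≤ 100) ⊆ E100 := by
      intro p hp
      rw [Finset.mem_filter] at hp
      exact mem_E100 (hTp p hp.1) hp.2
    rw [← Finset.prod_sdiff hsub]
    refine le_mul_of_one_le_left ?_ ?_
    · exact Finset.prod_nonneg (fun p hp => by
        have := cc_div_nonneg (hTp p (Finset.mem_filter.mp hp).1).two_le
        linarith)
    · calc (1:ℝ) = ∏ p ∈ E100 \ T.filter (fun p => p ≤ 100), 1 := by
            rw [Finset.prod_const_one]
        _ ≤ ∏ p ∈ E100 \ T.filter (fun p => p ≤ 100), (1 + cc p / p) := by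
            apply Finset.prod_le_prod (fun i _ => zero_le_one)
            intro i hi
            have := cc_div_nonneg (E100_two_le (Finset.mem_sdiff.mp hi).1)
            linarith
  have hlarge : ∏ p ∈ T.filter (fun p => ¬ p ≤ 100), (1 + cc p / p) ≤ 98/97 := by
    set T' := T.filter (fun p => ¬ p ≤ 100) with hT'
    have hT'p : ∀ p ∈ T', p.Prime ∧ 100 < p ∧ p ≤ N := by
      intro p hp
      rw [hT', Finset.mem_filter, hTdef, Finset.mem_filter, Finset.mem_range] at hp
      exact ⟨hp.1.2, by omega, by omega⟩
    have hsum := tail_sum N T' hT'p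
    have hnn : ∀ p ∈ T', 0 ≤ cc p / p := fun p hp => cc_div_nonneg (hT'p p hp).1.two_le
    have hlt : ∑ p ∈ T', cc p / p < 1 := by linarith
    refine (prod_one_add_le T' (fun p => cc p / p) hnn hlt).trans ?_
    have h97 : (97:ℝ)/98 ≤ 1 - ∑ p ∈ T', cc p / p := by linarith
    rw [div_le_div_iff₀ (by linarith) (by norm_num)]
    linarith
  have hfin : ∏ p ∈ T, (1 + cc p / p) ≤ 4.42 * (98/97) := by
    rw [hsplit]
    exact mul_le_mul hsmall hlarge (Finset.prod_nonneg hlargenn) (by norm_num)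
  calc ∑ n ∈ Finset.Icc 1 N, ((n:ℝ)/(n.totient:ℝ))^2
      = ∑ S ∈ T.powerset, (∏ p ∈ S, cc p) *
        (((Finset.Icc 1 N).filter (fun n => S ⊆ n.primeFactors)).card : ℝ) := h1
    _ ≤ ∑ S ∈ T.powerset, z * ∏ p ∈ S, (cc p / p) := Finset.sum_le_sum h2
    _ = z * ∏ p ∈ T, (1 + cc p / p) := h3
    _ ≤ z * (4.42 * (98/97)) := mul_le_mul_of_nonneg_left hfin (by linarith)
    _ < 4.5 * z := by nlinarith
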